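/- Let $U_k \sim \chi^2_p$ and $V_k \sim \chi^2_{n+p}$ be independent random variables (independent across $k$), let $C > 0$, and define the Markov chain $\sigma^2_k = (\sigma^2_{k-1} U_k + C)/V_k$ with stationary distribution $\mathrm{InverseGamma}(n/2, C/2)$ (requiring $n \ge 5$). Then the function $\psi(\sigma^2) = \sigma^2 - C/(n-2)$ satisfies $E[\psi(\sigma^2_k) \mid \sigma^2_{k-1}] = \frac{p}{n+p-2}\,\psi(\sigma^2_{k-1})$, i.e., $\psi$ is an eigenfunction of the forward operator with eigenvalue $p/(n+p-2)$. -/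

import Mathlib

open MeasureTheory ProbabilityTheory Real Set
open scoped ENNReal NNReal

/-- The chi-squared distribution with `d` degrees of freedom. -/
noncomputable def chiSqMeasure (d : ℕ) : Measure ℝ :=
  gammaMeasure ((d : ℝ) / 2) (1 / 2)

lemma gamma_pdf_mul_integrable {a r t : ℝ} (ha : 0 < a) (hr : 0 < r) (hat : 0 < a + t) :
    Integrable (fun x : ℝ => gammaPDFReal a r x * x ^ t) := by
  rw [← integrableOn_univ, ← Iio_union_Ici (a := (0:ℝ))]
  refine IntegrableOn.union ?_ ?_
  · refine (integrableOn_zero).congr_fun (fun x hx => ?_) measurableSet_Iio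
    simp [gammaPDFReal, not_le.mpr (mem_Iio.mp hx)]
  · rw [integrableOn_Ici_iff_integrableOn_Ioi]
    have h : IntegrableOn (fun x : ℝ => r ^ a / Gamma a * (x ^ (a + t - 1) * exp (-r * x ^ (1:ℝ)))) (Ioi 0) :=
      (integrableOn_rpow_mul_exp_neg_mul_rpow (p := 1) (s := a + t - 1) (b := r)
      (by linarith) zero_lt_one hr).const_mul (r ^ a / Gamma a)
    refine h.congr_fun (fun x hx => ?_) measurableSet_Ioi
    have hx0 : (0:ℝ) < x := hx
    simp only [gammaPDFReal, if_pos hx0.le, rpow_one]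
    rw [show a + t - 1 = (a - 1) + t by ring, rpow_add hx0, neg_mul]
    ring

lemma gamma_integrable_rpow {a r t : ℝ} (ha : 0 < a) (hr : 0 < r) (hat : 0 < a + t) :
    Integrable (fun x : ℝ => x ^ t) (gammaMeasure a r) := by
  have hmeas : Measurable fun x : ℝ => (gammaPDFReal a r x).toNNReal :=
    (measurable_gammaPDFReal a r).real_toNNReal
  have hpdf : gammaPDF a r = fun x => ((gammaPDFReal a r x).toNNReal : ℝ≥0∞) := by
    funext x; rw [gammaPDF, ENNReal.ofReal]
  have hsmul : (fun x : ℝ => (gammaPDFReal a r x).toNNReal • x ^ t)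
      = fun x : ℝ => gammaPDFReal a r x * x ^ t := by
    funext x
    rw [NNReal.smul_def, smul_eq_mul, Real.coe_toNNReal _ (gammaPDFReal_nonneg ha hr x)]
  rw [gammaMeasure, hpdf]
  refine (integrable_withDensity_iff_integrable_smul hmeas (g := fun x : ℝ => x ^ t)).mpr ?_
  rw [hsmul]
  exact gamma_pdf_mul_integrable ha hr hat

lemma gamma_moment {a r t : ℝ} (ha : 0 < a) (hr : 0 < r) (hat : 0 < a + t) :
    ∫ x, x ^ t ∂(gammaMeasure a r) = Gamma (a + t) / Gamma a * (1 / r) ^ t := by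
  have hmeas : Measurable fun x : ℝ => (gammaPDFReal a r x).toNNReal :=
    (measurable_gammaPDFReal a r).real_toNNReal
  have hpdf : gammaPDF a r = fun x => ((gammaPDFReal a r x).toNNReal : ℝ≥0∞) := by
    funext x; rw [gammaPDF, ENNReal.ofReal]
  rw [gammaMeasure, hpdf, integral_withDensity_eq_integral_smul hmeas]
  have hsmul : (fun x : ℝ => (gammaPDFReal a r x).toNNReal • x ^ t)
      = fun x : ℝ => gammaPDFReal a r x * x ^ t := by
    funext x
    rw [NNReal.smul_def, smul_eq_mul, Real.coe_toNNReal _ (gammaPDFReal_nonneg ha hr x)]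
  rw [hsmul]
  have hint := gamma_pdf_mul_integrable ha hr hat
  rw [← integral_add_compl (measurableSet_Ioi (a := (0:ℝ))) hint]
  have h2 : ∫ x in (Ioi (0:ℝ))ᶜ, gammaPDFReal a r x * x ^ t = 0 := by
    rw [compl_Ioi]
    refine integral_eq_zero_of_ae ?_
    have h0 : (volume.restrict (Iic (0:ℝ))) {0} = 0 := by
      simp [Measure.restrict_apply]
    filter_upwards [ae_restrict_mem measurableSet_Iic,
      measure_eq_zero_iff_ae_notMem.mp h0] with x hx hx0
    have : x < 0 := lt_of_le_of_ne hx (by simpa using hx0)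
    simp [gammaPDFReal, not_le.mpr this]
  rw [h2, add_zero]
  have h3 : ∫ x in Ioi (0:ℝ), gammaPDFReal a r x * x ^ t
      = r ^ a / Gamma a * ∫ x in Ioi (0:ℝ), x ^ (a + t - 1) * exp (-(r * x)) := by
    rw [← integral_const_mul]
    refine setIntegral_congr_fun measurableSet_Ioi (fun x hx => ?_)
    have hx0 : (0:ℝ) < x := hx
    simp only [gammaPDFReal, if_pos hx0.le]
    rw [show a + t - 1 = (a - 1) + t by ring, rpow_add hx0]
    ring
  rw [h3, integral_rpow_mul_exp_neg_mul_Ioi hat hr]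
  have hG : Gamma a ≠ 0 := (Gamma_pos_of_pos ha).ne'
  have h4 : (1 / r) ^ (a + t) = (1 / r) ^ a * (1 / r) ^ t := rpow_add (by positivity) _ _
  have h5 : r ^ a * (1 / r) ^ a = 1 := by
    rw [← mul_rpow hr.le (by positivity), mul_one_div, div_self hr.ne', one_rpow]
  rw [h4]
  rw [one_div] at h5
  simp only [one_div]
  rw [div_mul_eq_mul_div, div_mul_eq_mul_div, div_eq_div_iff hG hG]
  linear_combination (Gamma a * Gamma (a + t) * r⁻¹ ^ t) * h5

lemma chiSq_mean {d : ℕ} (hd : 1 ≤ d) : ∫ x, x ∂(chiSqMeasure d) = (d : ℝ) := by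
  have ha : (0:ℝ) < d / 2 := by positivity
  have h := gamma_moment (a := (d:ℝ)/2) (r := 1/2) (t := 1) ha (by norm_num) (by linarith)
  simp only [rpow_one] at h
  rw [chiSqMeasure, h, Gamma_add_one ha.ne']
  field_simp

lemma chiSq_integrable_id {d : ℕ} (hd : 1 ≤ d) :
    Integrable (fun x : ℝ => x) (chiSqMeasure d) := by
  have ha : (0:ℝ) < d / 2 := by positivity
  have h := gamma_integrable_rpow (a := (d:ℝ)/2) (r := 1/2) (t := 1) ha (by norm_num)
    (by linarith)
  simpa [rpow_one, chiSqMeasure] using h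

lemma chiSq_mean_inv {d : ℕ} (hd : 3 ≤ d) :
    ∫ x, x⁻¹ ∂(chiSqMeasure d) = 1 / ((d : ℝ) - 2) := by
  have hd3 : (3:ℝ) ≤ d := by exact_mod_cast hd
  have ha : (0:ℝ) < d / 2 := by positivity
  have hat : (0:ℝ) < d / 2 + (-1) := by linarith
  have h := gamma_moment (a := (d:ℝ)/2) (r := 1/2) (t := -1) ha (by norm_num) hat
  have hpow : ∀ x : ℝ, x ^ (-1 : ℝ) = x⁻¹ := fun x => by
    rw [show (-1 : ℝ) = ((-1 : ℤ) : ℝ) by norm_cast, rpow_intCast, zpow_neg_one]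
  simp only [hpow] at h
  rw [chiSqMeasure, h]
  have hne : (d:ℝ)/2 + (-1) ≠ 0 := hat.ne'
  have hG : Gamma ((d:ℝ)/2 + (-1)) ≠ 0 := (Gamma_pos_of_pos hat).ne'
  have hGam : Gamma ((d:ℝ)/2) = ((d:ℝ)/2 + (-1)) * Gamma ((d:ℝ)/2 + (-1)) := by
    have h1 := Gamma_add_one hne
    rw [show (d:ℝ)/2 + (-1) + 1 = (d:ℝ)/2 by ring] at h1
    exact h1
  have hd2 : (d:ℝ) - 2 ≠ 0 := by linarith
  rw [hGam]
  rw [show ((1:ℝ)/(1/2))⁻¹ = 1/2 by norm_num]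
  have key : Gamma ((d:ℝ)/2 + -1) / (((d:ℝ)/2 + -1) * Gamma ((d:ℝ)/2 + -1))
      = ((d:ℝ)/2 + -1)⁻¹ := by
    rw [mul_comm, ← div_div, div_self hG, one_div]
  rw [key, inv_eq_one_div, div_mul_div_comm, one_mul, div_eq_div_iff (by linarith) (by linarith)]
  ring

lemma chiSq_integrable_inv {d : ℕ} (hd : 3 ≤ d) :
    Integrable (fun x : ℝ => x⁻¹) (chiSqMeasure d) := by
  have hd3 : (3:ℝ) ≤ d := by exact_mod_cast hd
  have ha : (0:ℝ) < d / 2 := by positivity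
  have h := gamma_integrable_rpow (a := (d:ℝ)/2) (r := 1/2) (t := -1) ha (by norm_num)
    (by linarith)
  have hpow : ∀ x : ℝ, x ^ (-1 : ℝ) = x⁻¹ := fun x => by
    rw [show (-1 : ℝ) = ((-1 : ℤ) : ℝ) by norm_cast, rpow_intCast, zpow_neg_one]
  simpa [hpow, chiSqMeasure] using h

/-- For the marginal `σ²`-chain of the standard Bayesian regression Gibbs
sampler, `σ²_k = (σ²_{k-1} U_k + C) / V_k` with independent `U_k ~ χ²_p`, `V_k ~ χ²_{n+p}`,
the function `ψ(σ²) = σ² - C/(n-2)` is an eigenfunction of the forward operator with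
eigenvalue `p/(n+p-2)`:
`E[ψ(σ²_k) | σ²_{k-1} = s] = (p/(n+p-2)) ψ(s)`. -/
theorem regression_gibbs_eigenfunction
    {Ω : Type*} [MeasurableSpace Ω] (μ : Measure Ω) [IsProbabilityMeasure μ]
    (n p : ℕ) (hn : 5 ≤ n) (hp : 1 ≤ p) (C : ℝ) (hC : 0 < C)
    (U V : Ω → ℝ)
    (hU : μ.map U = chiSqMeasure p)
    (hV : μ.map V = chiSqMeasure (n + p))
    (hUV : IndepFun U V μ) :
    ∀ s : ℝ, 0 < s →
      ∫ ω, ((s * U ω + C) / V ω - C / ((n : ℝ) - 2)) ∂μ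
        = ((p : ℝ) / ((n : ℝ) + (p : ℝ) - 2)) * (s - C / ((n : ℝ) - 2)) := by
  intro s hs
  -- aemeasurability
  have hprobU : IsProbabilityMeasure (chiSqMeasure p) :=
    ProbabilityTheory.isProbabilityMeasure_gammaMeasure (by positivity) (by norm_num)
  have hprobV : IsProbabilityMeasure (chiSqMeasure (n + p)) :=
    ProbabilityTheory.isProbabilityMeasure_gammaMeasure (by positivity) (by norm_num)
  have hmU : AEMeasurable U μ := by
    refine aemeasurable_of_map_neZero ⟨?_⟩
    rw [hU]; exact hprobU.ne_zero _
  have hmV : AEMeasurable V μ := by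
    refine aemeasurable_of_map_neZero ⟨?_⟩
    rw [hV]; exact hprobV.ne_zero _
  -- integrability of U and of V⁻¹
  have hIU : Integrable U μ := by
    have := (integrable_map_measure aestronglyMeasurable_id hmU).mp
      (by rw [hU]; exact chiSq_integrable_id hp)
    simpa [Function.comp] using this
  have hIVinv : Integrable (fun ω => (V ω)⁻¹) μ := by
    have := (integrable_map_measure measurable_inv.aestronglyMeasurable hmV).mp
      (by rw [hV]; exact chiSq_integrable_inv (by omega))
    simpa [Function.comp_def] using this
  -- integrals of U and V⁻¹
  have hEU : ∫ ω, U ω ∂μ = (p : ℝ) := by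
    have := integral_map hmU (f := fun x : ℝ => x) aestronglyMeasurable_id
    rw [hU] at this
    rw [← this, chiSq_mean hp]
  have hEV : ∫ ω, (V ω)⁻¹ ∂μ = 1 / ((n : ℝ) + (p : ℝ) - 2) := by
    have := integral_map hmV (f := fun x : ℝ => x⁻¹) measurable_inv.aestronglyMeasurable
    rw [hV] at this
    rw [← this, chiSq_mean_inv (by omega)]
    push_cast; ring_nf
  -- independence of transformed variables
  have hX : Integrable (fun ω => s * U ω + C) μ := by
    exact (hIU.const_mul s).add (integrable_const C)
  have hindep : IndepFun (fun ω => s * U ω + C) (fun ω => (V ω)⁻¹) μ := by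
    have : IndepFun ((fun x : ℝ => s * x + C) ∘ U) ((fun x : ℝ => x⁻¹) ∘ V) μ :=
      hUV.comp (by fun_prop) measurable_inv
    simpa [Function.comp_def] using this
  have hmul : Integrable (fun ω => (s * U ω + C) * (V ω)⁻¹) μ :=
    hindep.integrable_mul hX hIVinv
  have hrw : (fun ω => (s * U ω + C) / V ω - C / ((n : ℝ) - 2))
      = fun ω => (s * U ω + C) * (V ω)⁻¹ - C / ((n : ℝ) - 2) := by
    funext ω; rw [div_eq_mul_inv]
  rw [hrw, integral_sub hmul (integrable_const _), integral_const,
    hindep.integral_fun_mul_eq_mul_integral hX.aestronglyMeasurable hIVinv.aestronglyMeasurable,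
    integral_add (hIU.const_mul s) (integrable_const C), integral_const,
    integral_const_mul, hEU, hEV]
  simp only [probReal_univ, measure_univ, ENNReal.toReal_one, smul_eq_mul, one_mul]
  have hn5 : (5:ℝ) ≤ (n:ℝ) := by exact_mod_cast hn
  have hp1 : (1:ℝ) ≤ (p:ℝ) := by exact_mod_cast hp
  have h1 : (n:ℝ) - 2 ≠ 0 := by linarith
  have h2 : (n:ℝ) + (p:ℝ) - 2 ≠ 0 := by linarith
  field_simp
  ring
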